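/- arXiv:1009.0807 — 2 statements merged into one kernel-verified Lean document; each statement's English description precedes it below -/
import Mathlib

section
/- Let E be an elliptic curve over a field K of characteristic not 2 (or K perfect), with Weierstrass coordinates, and let P ∈ E(K) be a point that is not 2-torsion. If E'/K is an elliptic curve with Weierstrass coordinate functions x', y' and φ : E' → E is an isogeny defined over K with φ(R) = P for some point R ∈ E'(K̄), then K(x'(R), y'(R)) = K(x'(R)). -/
open WeierstrassCurve Polynomial
open scoped WeierstrassCurve.Affine

/-- The x-coordinate of a nonsingular point, with junk value `0` at the point at infinity. -/
noncomputable def ptx {F : Type*} [Field F] {W : WeierstrassCurve.Affine F} :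
    W.Point → F
  | .zero => 0
  | @WeierstrassCurve.Affine.Point.some _ _ _ x _ _ => x

/-- The y-coordinate of a nonsingular point, with junk value `0` at the point at infinity. -/
noncomputable def pty {F : Type*} [Field F] {W : WeierstrassCurve.Affine F} :
    W.Point → F
  | .zero => 0
  | @WeierstrassCurve.Affine.Point.some _ _ _ _ y _ => y

/-- Two points on (possibly different) Weierstrass curves over the same field agree. -/
def SamePt {F : Type*} [Field F] {W₁ W₂ : WeierstrassCurve.Affine F}
    (P : W₁.Point) (Q : W₂.Point) : Prop :=
  ptx P = ptx Q ∧ pty P = pty Q ∧ (P = .zero ↔ Q = .zero)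

open scoped Classical in
/-- An isogeny (with base `L` and fixed algebraic closure `Ω`): a surjective, Galois-equivariant
group homomorphism on `Ω`-points with finite kernel. -/
structure Isogeny (L : Type*) [Field L] (Ω : Type*) [Field Ω] [Algebra L Ω]
    (W' W : WeierstrassCurve L) where
  hom : (W'.baseChange Ω).toAffine.Point →+ (W.baseChange Ω).toAffine.Point
  surjective : Function.Surjective hom
  finiteKer : Set.Finite {Q : (W'.baseChange Ω).toAffine.Point | hom Q = 0}
  equivariant : ∀ σ : Ω ≃ₐ[L] Ω, ∀ Q : (W'.baseChange Ω).toAffine.Point,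
    hom (WeierstrassCurve.Affine.Point.map (W' := W') σ.toAlgHom Q) =
      WeierstrassCurve.Affine.Point.map (W' := W) σ.toAlgHom (hom Q)

open scoped Classical in
/-- The degree of a (separable) isogeny: the size of its kernel. -/
noncomputable def Isogeny.degree {L : Type*} [Field L] {Ω : Type*} [Field Ω] [Algebra L Ω]
    {W' W : WeierstrassCurve L} (φ : Isogeny L Ω W' W) : ℕ :=
  Nat.card {Q : (W'.baseChange Ω).toAffine.Point | φ.hom Q = 0}

/-- auxiliary: a separable element fixed by all automorphisms of an algebraically closed
algebraic extension lies in the bottom subalgebra. -/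
lemma mem_bot_of_isSeparable_of_fixed {L Ω : Type*} [Field L] [Field Ω] [IsAlgClosed Ω]
    [Algebra L Ω] [Algebra.IsAlgebraic L Ω] {y : Ω} (hsep : IsSeparable L y)
    (hfix : ∀ σ : Ω ≃ₐ[L] Ω, σ y = y) : y ∈ (⊥ : Subalgebra L Ω) := by
  haveI : IsAlgClosure L Ω := ⟨inferInstance, inferInstance⟩
  by_contra h
  obtain ⟨z, hne, hconj⟩ :=
    (notMem_iff_exists_ne_and_isConjRoot hsep (IsAlgClosed.splits _)).mp h
  obtain ⟨σ, hσ⟩ := hconj.symm.exists_algEquiv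
  exact hne (hσ ▸ (hfix σ).symm)

/-- auxiliary: two affine points with equal coordinates are equal. -/
lemma some_eq_some' {F : Type*} [Field F] {W : WeierstrassCurve.Affine F} {x₁ x₂ y₁ y₂ : F}
    (hx : x₁ = x₂) (hy : y₁ = y₂) (h₁ : W.Nonsingular x₁ y₁) (h₂ : W.Nonsingular x₂ y₂) :
    WeierstrassCurve.Affine.Point.some _ _ h₁ = WeierstrassCurve.Affine.Point.some _ _ h₂ := by
  subst hx; subst hy; rfl

open scoped Classical in
/-- Lemma 2.1: if `char K ≠ 2` or `K` is perfect, `P ∈ E(K)` is not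
2-torsion, `φ : E' → E` is an isogeny defined over `K` and `φ(R) = P`, then
`K(x'(R), y'(R)) = K(x'(R))`. -/
theorem preimage_coordinate_field_eq {K : Type*} [Field K]
    (hK : (2 : K) ≠ 0 ∨ PerfectField K)
    (W' W : WeierstrassCurve K) [W'.IsElliptic] [W.IsElliptic]
    (φ : Isogeny K (AlgebraicClosure K) W' W)
    (P : (W.baseChange K).toAffine.Point) (hP : 2 • P ≠ 0)
    (R : (W'.baseChange (AlgebraicClosure K)).toAffine.Point)
    (hR : φ.hom R = WeierstrassCurve.Affine.Point.map (W' := W)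
      (Algebra.ofId K (AlgebraicClosure K)) P) :
    IntermediateField.adjoin K {ptx R, pty R} = IntermediateField.adjoin K {ptx R} := by
  set Ω := AlgebraicClosure K
  cases R with
  | zero => simp [ptx, pty, Set.pair_eq_singleton]
  | some x y hxy =>
    show IntermediateField.adjoin K {x, y} = IntermediateField.adjoin K {x}
    set L := IntermediateField.adjoin K {x} with hL
    have hxL : x ∈ L := IntermediateField.subset_adjoin K {x} rfl
    suffices hy : y ∈ L by
      apply le_antisymm
      · rw [IntermediateField.adjoin_le_iff]
        rintro z (rfl | rfl)
        exacts [hxL, hy]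
      · rw [IntermediateField.adjoin_le_iff]
        rintro z rfl
        exact IntermediateField.subset_adjoin K _ (Set.mem_insert _ _)
    -- every L-automorphism of Ω fixes y
    have hfix : ∀ σ : Ω ≃ₐ[↥L] Ω, σ y = y := by
      intro σ
      have hτx : σ x = x := σ.commutes ⟨x, hxL⟩
      set τ : Ω ≃ₐ[K] Ω := σ.restrictScalars K with hτ
      have key := φ.equivariant τ (.some _ _ hxy)
      rw [hR, WeierstrassCurve.Affine.Point.map_map,
        Subsingleton.elim (τ.toAlgHom.comp (Algebra.ofId K Ω)) (Algebra.ofId K Ω)] at key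
      have hns : (W'.baseChange Ω).toAffine.Nonsingular (τ x) (τ y) :=
        (WeierstrassCurve.Affine.baseChange_nonsingular W' τ.toAlgHom.injective x y).mpr hxy
      rcases WeierstrassCurve.Affine.Y_eq_of_X_eq hns.1 hxy.1 hτx with hy | hy
      · exact hy
      · exfalso
        have hmap : WeierstrassCurve.Affine.Point.map (W' := W') τ.toAlgHom
            (WeierstrassCurve.Affine.Point.some _ _ hxy)
              = -(WeierstrassCurve.Affine.Point.some _ _ hxy) := by
          rw [WeierstrassCurve.Affine.Point.map_some,
            WeierstrassCurve.Affine.Point.neg_some]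
          exact some_eq_some' hτx hy _ _
        rw [hmap, map_neg, hR] at key
        apply hP
        apply WeierstrassCurve.Affine.Point.map_injective (W' := W) (f := Algebra.ofId K Ω)
        rw [map_zero, map_nsmul (WeierstrassCurve.Affine.Point.map (W' := W) (Algebra.ofId K Ω))
          2 P, two_smul]
        exact (congrArg (· + WeierstrassCurve.Affine.Point.map (W' := W) (Algebra.ofId K Ω) P)
          key).symm.trans (neg_add_cancel _)
    -- conclusion from separability via Galois theory
    have final : IsSeparable (↥L) y → y ∈ L := by
      intro hsep
      haveI : Algebra.IsAlgebraic (↥L) Ω := inferInstance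
      obtain ⟨l, hl⟩ := Algebra.mem_bot.mp (mem_bot_of_isSeparable_of_fixed hsep hfix)
      exact hl ▸ l.2
    rcases hK with h2 | hperf
    · -- char ≠ 2
      by_cases hyy : (W'.baseChange Ω).toAffine.negY x y = y
      · -- y = -(a₁x+a₃)/2 ∈ L directly
        have h2' : (2 : Ω) ≠ 0 := by
          have hmap2 : algebraMap K Ω (2 : K) = 2 := by rw [map_ofNat]
          exact fun h => h2 ((algebraMap K Ω).injective (by rw [hmap2, h, map_zero]))
        have : y = -((W'.baseChange Ω).a₁ * x + (W'.baseChange Ω).a₃) / 2 := by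
          rw [WeierstrassCurve.Affine.negY] at hyy
          field_simp
          linear_combination (-1 : Ω) * hyy
        rw [this]
        refine div_mem (neg_mem (add_mem (mul_mem ?_ hxL) ?_)) (ofNat_mem L 2)
        · exact L.algebraMap_mem W'.a₁
        · exact L.algebraMap_mem W'.a₃
      · -- y satisfies a separable quadratic over L
        apply final
        have hbmem : (W'.baseChange Ω).a₁ * x + (W'.baseChange Ω).a₃ ∈ L :=
          add_mem (mul_mem (L.algebraMap_mem W'.a₁) hxL) (L.algebraMap_mem W'.a₃)
        have hcmem : x ^ 3 + (W'.baseChange Ω).a₂ * x ^ 2 + (W'.baseChange Ω).a₄ * x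
            + (W'.baseChange Ω).a₆ ∈ L :=
          add_mem (add_mem (add_mem (pow_mem hxL 3) (mul_mem (L.algebraMap_mem W'.a₂)
            (pow_mem hxL 2))) (mul_mem (L.algebraMap_mem W'.a₄) hxL))
            (L.algebraMap_mem W'.a₆)
        set b : ↥L := ⟨_, hbmem⟩ with hbdef
        set c : ↥L := ⟨_, hcmem⟩ with hcdef
        have hb : (b : Ω) = (W'.baseChange Ω).a₁ * x + (W'.baseChange Ω).a₃ := rfl
        have hc : (c : Ω) = x ^ 3 + (W'.baseChange Ω).a₂ * x ^ 2 + (W'.baseChange Ω).a₄ * x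
            + (W'.baseChange Ω).a₆ := rfl
        set p : Polynomial ↥L := X ^ 2 + C b * X - C c with hpdef
        have heq : y ^ 2 + (W'.baseChange Ω).a₁ * x * y + (W'.baseChange Ω).a₃ * y
            = x ^ 3 + (W'.baseChange Ω).a₂ * x ^ 2 + (W'.baseChange Ω).a₄ * x
              + (W'.baseChange Ω).a₆ :=
          (WeierstrassCurve.Affine.equation_iff x y).mp hxy.1
        have hsum : y + (W'.baseChange Ω).toAffine.negY x y = -(b : Ω) := by
          rw [WeierstrassCurve.Affine.negY, hb]; ring
        have hprod : y * (W'.baseChange Ω).toAffine.negY x y = -(c : Ω) := by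
          rw [WeierstrassCurve.Affine.negY, hc]
          linear_combination -heq
        have halg : ∀ z : ↥L, algebraMap (↥L) Ω z = (z : Ω) := fun _ => rfl
        have hmap : p.map (algebraMap (↥L) Ω)
            = (X - C y) * (X - C ((W'.baseChange Ω).toAffine.negY x y)) := by
          have h1 : (C y + C ((W'.baseChange Ω).toAffine.negY x y) : Polynomial Ω)
              = -C (b : Ω) := by rw [← map_add, hsum, map_neg]
          have h2 : (C y * C ((W'.baseChange Ω).toAffine.negY x y) : Polynomial Ω)
              = -C (c : Ω) := by rw [← map_mul, hprod, map_neg]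
          have hmapped : p.map (algebraMap (↥L) Ω) = X ^ 2 + C (b : Ω) * X - C (c : Ω) := by
            rw [hpdef]
            simp only [Polynomial.map_sub, Polynomial.map_add, Polynomial.map_mul,
              Polynomial.map_pow, Polynomial.map_X, Polynomial.map_C, halg]
          rw [hmapped]
          linear_combination X * h1 - h2
        have haeval : (aeval y) p = 0 := by
          rw [aeval_def, ← Polynomial.eval_map, hmap]
          simp
        have hsepmap : (p.map (algebraMap (↥L) Ω)).Separable := by
          rw [hmap]
          refine (separable_X_sub_C).mul (separable_X_sub_C)
            (Polynomial.isCoprime_X_sub_C_of_isUnit_sub ?_)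
          exact (sub_ne_zero.mpr (Ne.symm hyy)).isUnit
        exact ((Polynomial.separable_map _).mp hsepmap).of_dvd (minpoly.dvd (↥L) y haeval)
    · -- perfect field
      apply final
      haveI : PerfectField K := hperf
      haveI : Algebra.IsSeparable K Ω := inferInstance
      exact IsSeparable.tower_top (F := K) (L := ↥L) (Algebra.IsSeparable.isSeparable K y)
end

section
/- Let G be a subgroup of GL₂(ℤ/lℤ) for a prime l > 2 containing SL₂(ℤ/lℤ). Then the first group cohomology H¹(G, (ℤ/lℤ)²) (with the standard action) is trivial. -/
/-- for a prime `l > 2` and a subgroup `SL₂(ℤ/lℤ) ≤ G ≤ GL₂(ℤ/lℤ)`, the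
cohomology group `H¹(G, (ℤ/lℤ)²)` is trivial: every crossed homomorphism `β : G → (ℤ/lℤ)²`
(for the standard action by matrix multiplication) is principal. -/
theorem h1_trivial_of_SL_le (l : ℕ) (hl : l.Prime) (hl2 : 2 < l)
    (G : Subgroup (Matrix.GeneralLinearGroup (Fin 2) (ZMod l)))
    (hSL : ∀ A : Matrix.SpecialLinearGroup (Fin 2) (ZMod l),
      Matrix.SpecialLinearGroup.toGL A ∈ G)
    (β : G → (Fin 2 → ZMod l))
    (hβ : ∀ A B : G,
      β (A * B) = ((A : Matrix.GeneralLinearGroup (Fin 2) (ZMod l)) :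
        Matrix (Fin 2) (Fin 2) (ZMod l)).mulVec (β B) + β A) :
    ∃ v : Fin 2 → ZMod l, ∀ A : G,
      β A = ((A : Matrix.GeneralLinearGroup (Fin 2) (ZMod l)) :
        Matrix (Fin 2) (Fin 2) (ZMod l)).mulVec v - v := by
  haveI : Fact l.Prime := ⟨hl⟩
  set c : G := ⟨Matrix.SpecialLinearGroup.toGL (-1), hSL (-1)⟩ with hc
  have hcmat : ((c : Matrix.GeneralLinearGroup (Fin 2) (ZMod l)) :
      Matrix (Fin 2) (Fin 2) (ZMod l)) = -1 := by
    simp [hc, Matrix.SpecialLinearGroup.toGL]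
  have h2 : (2 : ZMod l) ≠ 0 := by
    intro h
    have hd : l ∣ 2 := by
      exact_mod_cast (ZMod.natCast_eq_zero_iff 2 l).mp (by exact_mod_cast h)
    have := Nat.le_of_dvd (by norm_num) hd
    omega
  -- central element commutation
  have hcomm : ∀ A : G, c * A = A * c := by
    intro A
    apply Subtype.ext
    apply Units.ext
    push_cast
    show ((c : Matrix.GeneralLinearGroup (Fin 2) (ZMod l)) :
        Matrix (Fin 2) (Fin 2) (ZMod l)) * _ = _ * ((c : Matrix.GeneralLinearGroup (Fin 2) (ZMod l)) :
        Matrix (Fin 2) (Fin 2) (ZMod l))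
    rw [hcmat, neg_one_mul, mul_neg_one]
  -- the key identity: 2 • β A = β c - A.mulVec (β c)
  have key : ∀ A : G, (2 : ZMod l) • β A =
      β c - ((A : Matrix.GeneralLinearGroup (Fin 2) (ZMod l)) :
        Matrix (Fin 2) (Fin 2) (ZMod l)).mulVec (β c) := by
    intro A
    have h1 := hβ c A
    have h2' := hβ A c
    rw [hcomm A] at h1
    rw [h1, hcmat] at h2'
    have : Matrix.mulVec (-1 : Matrix (Fin 2) (Fin 2) (ZMod l)) (β A) = -(β A) := by
      simp [Matrix.neg_mulVec, Matrix.one_mulVec]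
    rw [this] at h2'
    have := h2'
    funext i
    have h3 := congrFun this i
    simp only [Pi.add_apply, Pi.neg_apply, Pi.sub_apply, Pi.smul_apply, smul_eq_mul] at h3 ⊢
    linear_combination -h3
  refine ⟨-((2 : ZMod l)⁻¹ • β c), fun A => ?_⟩
  have hk := key A
  have hinv : (2 : ZMod l)⁻¹ * 2 = 1 := ZMod.inv_mul_of_unit 2
    ((ZMod.isUnit_iff_coprime 2 l).mpr (by
      exact (Nat.coprime_primes Nat.prime_two hl).mpr (by omega)))
  rw [Matrix.mulVec_neg, Matrix.mulVec_smul]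
  funext i
  have h3 := congrFun hk i
  simp only [Pi.smul_apply, Pi.neg_apply, Pi.sub_apply, smul_eq_mul] at h3 ⊢
  have hf : (β A i) = (2 : ZMod l)⁻¹ * 2 * (β A i) := by rw [hinv, one_mul]
  linear_combination hf + (2 : ZMod l)⁻¹ * h3
end
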